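/- Genocchi–Hermite formula: if U ⊆ ℂ is a convex domain, f is holomorphic on U, and n ≥ 0, then for all z = (z₁,…,z_{n+1}) ∈ U^{n+1}, f^[n](z) = ∫_{A_n} f^{(n)}(θ₁z₁ + ⋯ + θ_n z_n + (1−θ₁−⋯−θ_n)z_{n+1}) dθ₁⋯dθ_n, where A_n = {θ ∈ ℝⁿ : θⱼ ≥ 0, Σθⱼ ≤ 1} is the standard n-simplex and f^{(n)} is the n-th complex derivative. -/

import Mathlib

/-- A system of divided differences of `f` on `Ω`: `F k` is the `k`-th divided
difference `f^[k]`, holomorphic on `Ω^(k+1)`, agreeing with `f` for `k = 0` and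
satisfying the divided-difference recursion off the set `z₁ = z_{k+2}`. -/
def IsDividedDiffSystem (Ω : Set ℂ) (f : ℂ → ℂ)
    (F : ∀ k : ℕ, (Fin (k + 1) → ℂ) → ℂ) : Prop :=
  (∀ z : Fin 1 → ℂ, z 0 ∈ Ω → F 0 z = f (z 0)) ∧
  (∀ k, DifferentiableOn ℂ (F k) {z | ∀ j, z j ∈ Ω}) ∧
  (∀ k, ∀ z : Fin (k + 2) → ℂ, (∀ j, z j ∈ Ω) →
    z 0 ≠ z (Fin.last (k + 1)) →
    F (k + 1) z =
      (F k (fun j => z j.castSucc) - F k (fun j => z j.succ)) /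
        (z 0 - z (Fin.last (k + 1))))


open MeasureTheory Set

namespace GenocchiAux

/-! ### Basic objects -/

def A (n : ℕ) : Set (Fin n → ℝ) := {θ | (∀ j, 0 ≤ θ j) ∧ ∑ j, θ j ≤ 1}

noncomputable def pt {n : ℕ} (z : Fin (n + 1) → ℂ) (θ : Fin n → ℝ) : ℂ :=
  (∑ j : Fin n, (θ j : ℂ) * z j.castSucc) + ((1 - ∑ j, θ j : ℝ) : ℂ) * z (Fin.last n)

noncomputable def D (U : Set ℂ) (f : ℂ → ℂ) (k : ℕ) : ℂ → ℂ := iteratedDerivWithin k f U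

noncomputable def G (U : Set ℂ) (f : ℂ → ℂ) (n : ℕ) (z : Fin (n + 1) → ℂ) : ℂ :=
  ∫ θ in A n, D U f n (pt z θ)

def cyc {n : ℕ} (v : Fin (n + 1) → ℂ) : Fin (n + 1) → ℂ :=
  Fin.snoc (fun i : Fin n => v i.succ) (v 0)

/-! ### The simplex -/

lemma isClosed_A (n : ℕ) : IsClosed (A n) := by
  have h1 : IsClosed {θ : Fin n → ℝ | ∀ j, 0 ≤ θ j} := by
    have : {θ : Fin n → ℝ | ∀ j, 0 ≤ θ j} = ⋂ j, {θ | 0 ≤ θ j} := by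
      ext θ; simp
    rw [this]
    exact isClosed_iInter fun j => isClosed_le continuous_const (continuous_apply j)
  have h2 : IsClosed {θ : Fin n → ℝ | ∑ j, θ j ≤ 1} :=
    isClosed_le (by exact continuous_finset_sum _ fun j _ => continuous_apply j) continuous_const
  exact h1.inter h2

lemma isCompact_A (n : ℕ) : IsCompact (A n) := by
  refine IsCompact.of_isClosed_subset
    (isCompact_univ_pi fun i => isCompact_Icc (a := (0:ℝ)) (b := 1)) (isClosed_A n) ?_
  rintro θ ⟨h0, h1⟩ i _
  refine ⟨h0 i, ?_⟩
  calc θ i ≤ ∑ j, θ j := Finset.single_le_sum (fun j _ => h0 j) (Finset.mem_univ i)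
    _ ≤ 1 := h1

lemma measurableSet_A (n : ℕ) : MeasurableSet (A n) := (isClosed_A n).measurableSet

lemma pt_mem {n : ℕ} {s : Set ℂ} (hs : Convex ℝ s) {z : Fin (n + 1) → ℂ}
    (hz : ∀ j, z j ∈ s) {θ : Fin n → ℝ} (hθ : θ ∈ A n) : pt z θ ∈ s := by
  have := hs.sum_mem (t := Finset.univ) (w := Fin.snoc θ (1 - ∑ j, θ j))
    (z := fun j => z j) ?_ ?_ (fun j _ => hz j)
  · convert this using 1
    rw [pt, Fin.sum_univ_castSucc]
    simp [Complex.real_smul]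
  · intro j _
    refine Fin.lastCases ?_ ?_ j
    · simpa using hθ.2
    · intro i; simpa using hθ.1 i
  · rw [Fin.sum_univ_castSucc]
    simp

lemma continuous_pt {n : ℕ} (z : Fin (n + 1) → ℂ) : Continuous (pt z) := by
  unfold pt; fun_prop

/-! ### Derivatives -/

variable {U : Set ℂ} {f : ℂ → ℂ}

lemma D_diff (hU : IsOpen U) (hf : DifferentiableOn ℂ f U) (k : ℕ) :
    DifferentiableOn ℂ (D U f k) U :=
  (hf.contDiffOn hU (n := ⊤)).differentiableOn_iteratedDerivWithin
    (by exact_mod_cast lt_top_iff_ne_top.2 (by simp)) hU.uniqueDiffOn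

lemma D_cont (hU : IsOpen U) (hf : DifferentiableOn ℂ f U) (k : ℕ) :
    ContinuousOn (D U f k) U := (D_diff hU hf k).continuousOn

lemma D_hasDerivAt (hU : IsOpen U) (hf : DifferentiableOn ℂ f U) (k : ℕ) {x : ℂ} (hx : x ∈ U) :
    HasDerivAt (D U f k) (D U f (k + 1) x) x := by
  have hdiff : DifferentiableAt ℂ (D U f k) x :=
    (D_diff hU hf k).differentiableAt (hU.mem_nhds hx)
  have : D U f (k + 1) x = deriv (D U f k) x := by
    rw [D, iteratedDerivWithin_succ, derivWithin_of_isOpen hU hx]; rfl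
  rw [this]
  exact hdiff.hasDerivAt

lemma ftc (hU : IsOpen U) (hf : DifferentiableOn ℂ f U) (k : ℕ) {c d : ℂ} {s : ℝ}
    (hs : 0 ≤ s) (hmem : ∀ t ∈ Icc 0 s, c + t • d ∈ U) :
    ∫ t in Icc 0 s, d • D U f (k + 1) (c + t • d) = D U f k (c + s • d) - D U f k c := by
  have key : ∫ t in (0:ℝ)..s, d • D U f (k + 1) (c + t • d)
      = D U f k (c + s • d) - D U f k c := by
    have := intervalIntegral.integral_eq_sub_of_hasDerivAt
      (f := fun t : ℝ => D U f k (c + t • d))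
      (f' := fun t : ℝ => d • D U f (k + 1) (c + t • d)) (a := 0) (b := s) ?_ ?_
    · simpa using this
    · intro t ht
      rw [uIcc_of_le hs] at ht
      have hφ : HasDerivAt (fun t : ℝ => c + t • d) d t := by
        simpa using ((hasDerivAt_id t).smul_const d).const_add c
      exact HasDerivAt.scomp t (D_hasDerivAt hU hf k (hmem t ht)) hφ
    · apply ContinuousOn.intervalIntegrable
      rw [uIcc_of_le hs]
      have hcont : Continuous (fun t : ℝ => c + t • d) := by fun_prop
      exact ((D_cont hU hf (k+1)).comp hcont.continuousOn hmem).const_smul d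
  rw [MeasureTheory.integral_Icc_eq_integral_Ioc, ← intervalIntegral.integral_of_le hs, key]

lemma integrableOn_D_pt (hU : IsOpen U) (hUc : Convex ℝ U) (hf : DifferentiableOn ℂ f U)
    {n : ℕ} (k : ℕ) {z : Fin (n + 1) → ℂ} (hz : ∀ j, z j ∈ U) :
    IntegrableOn (fun θ => D U f k (pt z θ)) (A n) := by
  refine ContinuousOn.integrableOn_compact (isCompact_A n) ?_
  exact (D_cont hU hf k).comp (continuous_pt z).continuousOn
    (fun θ hθ => pt_mem hUc hz hθ)

/-! ### Decomposition lemmas -/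

lemma pt_cons {n : ℕ} (z : Fin (n + 2) → ℂ) (t : ℝ) (η : Fin n → ℝ) :
    pt z (Fin.cons t η) = pt (fun j => z j.succ) η + t • (z 0 - z (Fin.last (n + 1))) := by
  simp only [pt, Fin.sum_cons, Fin.sum_univ_succ, Fin.cons_zero, Fin.cons_succ,
    Complex.real_smul, Fin.succ_last]
  push_cast
  have h : ∀ i : Fin n, (i.succ).castSucc = (i.castSucc).succ := fun i => rfl
  simp only [h, Fin.castSucc_zero]
  ring

lemma pt_endpoint {n : ℕ} (z : Fin (n + 2) → ℂ) (η : Fin n → ℝ) :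
    pt (fun j => z j.succ) η + ((1 - ∑ i, η i : ℝ)) • (z 0 - z (Fin.last (n + 1)))
      = pt (cyc (fun j : Fin (n + 1) => z j.castSucc)) η := by
  simp only [pt, cyc, Complex.real_smul, Fin.snoc_castSucc, Fin.snoc_last, Fin.succ_last]
  push_cast
  have h : ∀ i : Fin n, (i.succ).castSucc = (i.castSucc).succ := fun i => rfl
  simp only [h, Fin.castSucc_zero]
  ring

/-! ### The cyclic substitution -/

noncomputable def T (m : ℕ) (θ : Fin (m + 1) → ℝ) : Fin (m + 1) → ℝ :=
  Fin.cons (1 - ∑ j, θ j) (fun i => θ i.castSucc)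

lemma measurePreserving_T (m : ℕ) :
    MeasurePreserving (T m) (volume : Measure (Fin (m + 1) → ℝ)) volume := by
  set E := MeasurableEquiv.piFinSuccAbove (fun _ : Fin (m + 1) => ℝ) (Fin.last m) with hE
  set K : ℝ × (Fin m → ℝ) → ℝ × (Fin m → ℝ) :=
    fun p => ((1 - ∑ i, p.2 i) - p.1, p.2) with hK
  set ρ : (Fin (m + 1) → ℝ) → (Fin (m + 1) → ℝ) :=
    fun x j => x ((finRotate (m + 1)).symm j) with hρ
  have hTeq : T m = ρ ∘ (⇑E.symm ∘ (K ∘ ⇑E)) := by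
    funext θ j
    have hEθ : E θ = (θ (Fin.last m), fun i => θ i.castSucc) := by
      simp [hE, MeasurableEquiv.piFinSuccAbove_apply, Fin.succAbove_last, Fin.init_def]
    have hsum : (1 - ∑ i : Fin m, θ i.castSucc) - θ (Fin.last m) = 1 - ∑ j, θ j := by
      rw [Fin.sum_univ_castSucc]; ring
    have hKE : K (E θ) = (1 - ∑ j, θ j, fun i => θ i.castSucc) := by
      rw [hEθ]; simp [hK, hsum]
    have hEs : E.symm (K (E θ)) = Fin.snoc (fun i => θ i.castSucc) (1 - ∑ j, θ j) := by
      rw [hKE]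
      simp [hE, MeasurableEquiv.piFinSuccAbove_symm_apply, Fin.snocEquiv]
    simp only [Function.comp_apply, hEs, hρ]
    refine Fin.cases ?_ (fun i => ?_) j
    · have h1 : (finRotate (m + 1)).symm 0 = Fin.last m := by
        rw [Equiv.symm_apply_eq, finRotate_last]
      rw [T, h1]
      simp
    · have h2 : (finRotate (m + 1)).symm i.succ = i.castSucc := by
        rw [Equiv.symm_apply_eq, finRotate_succ_apply, Fin.coeSucc_eq_succ]
      rw [T, h2]
      simp
  have hEmp : MeasurePreserving (⇑E) (volume : Measure (Fin (m + 1) → ℝ))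
      (volume : Measure (ℝ × (Fin m → ℝ))) := volume_preserving_piFinSuccAbove _ _
  have hKmp : MeasurePreserving K (volume : Measure (ℝ × (Fin m → ℝ))) volume := by
    have hK' : MeasurePreserving (fun p : (Fin m → ℝ) × ℝ => (p.1, (1 - ∑ i, p.1 i) - p.2))
        ((volume : Measure (Fin m → ℝ)).prod (volume : Measure ℝ))
        ((volume : Measure (Fin m → ℝ)).prod (volume : Measure ℝ)) := by
      have := MeasurePreserving.skew_product
        (f := (id : (Fin m → ℝ) → (Fin m → ℝ)))
        (g := fun (y : Fin m → ℝ) (x : ℝ) => (1 - ∑ i, y i) - x)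
        (μc := (volume : Measure ℝ)) (μd := (volume : Measure ℝ))
        (MeasurePreserving.id (volume : Measure (Fin m → ℝ))) (by fun_prop)
        (Filter.Eventually.of_forall fun y =>
          (Measure.measurePreserving_sub_left volume (1 - ∑ i, y i)).map_eq)
      simpa using this
    have hswap1 : MeasurePreserving (Prod.swap : ℝ × (Fin m → ℝ) → (Fin m → ℝ) × ℝ)
        ((volume : Measure ℝ).prod volume) ((volume : Measure (Fin m → ℝ)).prod volume) :=
      Measure.measurePreserving_swap
    have hswap2 : MeasurePreserving (Prod.swap : (Fin m → ℝ) × ℝ → ℝ × (Fin m → ℝ))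
        ((volume : Measure (Fin m → ℝ)).prod volume) ((volume : Measure ℝ).prod volume) :=
      Measure.measurePreserving_swap
    have : K = Prod.swap ∘ (fun p : (Fin m → ℝ) × ℝ => (p.1, (1 - ∑ i, p.1 i) - p.2)) ∘
        Prod.swap := by
      funext p; simp [hK, Prod.swap]
    rw [this]
    exact (hswap2.comp hK').comp hswap1
  have hρmp : MeasurePreserving ρ (volume : Measure (Fin (m + 1) → ℝ)) volume := by
    have : ρ = ⇑(MeasurableEquiv.piCongrLeft (fun _ : Fin (m + 1) => ℝ) (finRotate (m + 1))) := by
      funext x j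
      have := MeasurableEquiv.piCongrLeft_apply_apply (finRotate (m + 1))
        (β := fun _ : Fin (m + 1) => ℝ) x ((finRotate (m + 1)).symm j)
      rw [Equiv.apply_symm_apply] at this
      rw [this]
    rw [this]
    exact volume_measurePreserving_piCongrLeft _ _
  rw [hTeq]
  exact hρmp.comp ((MeasurePreserving.symm E hEmp).comp (hKmp.comp hEmp))

noncomputable def Te (m : ℕ) : (Fin (m + 1) → ℝ) ≃ᵐ (Fin (m + 1) → ℝ) where
  toEquiv :=
    { toFun := T m
      invFun := fun θ => Fin.snoc (fun i => θ i.succ) (1 - ∑ j, θ j)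
      left_inv := by
        intro θ
        funext j
        have hsum : ∑ j, T m θ j = 1 - θ (Fin.last m) := by
          rw [T, Fin.sum_cons]
          rw [Fin.sum_univ_castSucc (f := θ)]
          ring
        refine Fin.lastCases ?_ ?_ j
        · simp [hsum]
        · intro i
          simp [T]
      right_inv := by
        intro θ
        funext j
        have hsum : ∑ j, Fin.snoc (fun i => θ i.succ) (1 - ∑ j, θ j) j = 1 - θ 0 := by
          rw [Fin.sum_univ_castSucc]
          simp [Fin.sum_univ_succ (f := θ)]
          ring
        refine Fin.cases ?_ ?_ j
        · simp [T, hsum]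
        · intro i
          simp [T]
      }
  measurable_toFun := (measurePreserving_T m).measurable
  measurable_invFun := by
    apply measurable_pi_iff.2
    intro j
    refine Fin.lastCases ?_ ?_ j
    · simpa using (measurable_const.fun_sub (Finset.univ.measurable_sum
        (fun i _ => measurable_pi_apply i)))
    · intro i
      simpa using measurable_pi_apply i.succ

lemma sum_T (m : ℕ) (θ : Fin (m + 1) → ℝ) : ∑ j, T m θ j = 1 - θ (Fin.last m) := by
  rw [T, Fin.sum_cons, Fin.sum_univ_castSucc (f := θ)]; ring

lemma T_preimage_A (m : ℕ) : T m ⁻¹' A (m + 1) = A (m + 1) := by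
  ext θ
  simp only [mem_preimage, A, mem_setOf_eq, sum_T]
  constructor
  · rintro ⟨h0, h1⟩
    have hlast : 0 ≤ θ (Fin.last m) := by linarith
    have hsle : ∑ j, θ j ≤ 1 := by
      have := h0 0
      rw [T] at this
      simp at this
      linarith
    refine ⟨fun j => ?_, hsle⟩
    refine Fin.lastCases hlast (fun i => ?_) j
    have := h0 i.succ
    rw [T] at this
    simpa using this
  · rintro ⟨h0, h1⟩
    refine ⟨fun j => ?_, by linarith [h0 (Fin.last m)]⟩
    refine Fin.cases ?_ (fun i => ?_) j
    · rw [T]; simpa using h1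
    · rw [T]; simpa using h0 i.castSucc

lemma pt_T {m : ℕ} (v : Fin (m + 2) → ℂ) (θ : Fin (m + 1) → ℝ) :
    pt v (T m θ) = pt (cyc v) θ := by
  rw [pt, pt, sum_T]
  rw [Fin.sum_univ_succ (f := fun j : Fin (m + 1) => ((T m θ j : ℝ) : ℂ) * v j.castSucc)]
  rw [Fin.sum_univ_castSucc (f := fun j : Fin (m + 1) => ((θ j : ℝ) : ℂ) * (cyc v) j.castSucc)]
  simp only [T, Fin.cons_zero, Fin.cons_succ, cyc, Fin.snoc_castSucc, Fin.snoc_last,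
    Fin.castSucc_zero, Fin.succ_last]
  push_cast
  have h : ∀ i : Fin m, (i.succ).castSucc = (i.castSucc).succ := fun i => rfl
  simp only [h]
  ring

lemma G_cyc {n : ℕ} (v : Fin (n + 1) → ℂ) :
    G U f n (cyc v) = G U f n v := by
  cases n with
  | zero =>
    have hv : cyc v = v := by
      funext j
      refine Fin.lastCases ?_ (fun i => i.elim0) j
      rw [cyc, Fin.snoc_last]
      rfl
    rw [hv]
  | succ m =>
    calc G U f (m + 1) (cyc v)
        = ∫ θ in T m ⁻¹' A (m + 1), D U f (m + 1) (pt v (T m θ)) := by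
          rw [T_preimage_A]
          rw [G]
          congr 1
          ext θ
          rw [pt_T]
      _ = ∫ θ in A (m + 1), D U f (m + 1) (pt v θ) := by
          have hemb : MeasurableEmbedding (T m) := (Te m).measurableEmbedding
          exact (measurePreserving_T m).setIntegral_preimage_emb hemb
            (fun x => D U f (m + 1) (pt v x)) (A (m + 1))
      _ = G U f (m + 1) v := rfl


lemma G_succ (hU : IsOpen U) (hUc : Convex ℝ U) (hf : DifferentiableOn ℂ f U)
    {n : ℕ} (z : Fin (n + 2) → ℂ) (hz : ∀ j, z j ∈ U) :
    (z 0 - z (Fin.last (n + 1))) • G U f (n + 1) z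
      = G U f n (fun j => z j.castSucc) - G U f n (fun j => z j.succ) := by
  have hzs : ∀ j : Fin (n + 1), (fun j : Fin (n + 1) => z j.succ) j ∈ U := fun j => hz _
  have hcycmem : ∀ j, cyc (fun j : Fin (n + 1) => z j.castSucc) j ∈ U := by
    intro j
    refine Fin.lastCases ?_ (fun i => ?_) j
    · rw [cyc, Fin.snoc_last]; exact hz _
    · rw [cyc, Fin.snoc_castSucc]; exact hz _
  -- the product-space version of the simplex
  set B : Set (ℝ × (Fin n → ℝ)) :=
    {p | (0 ≤ p.1 ∧ ∀ i, 0 ≤ p.2 i) ∧ p.1 + ∑ i, p.2 i ≤ 1} with hB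
  set e' : ℝ × (Fin n → ℝ) → (Fin (n + 1) → ℝ) := fun p => Fin.cons p.1 p.2 with he'
  have hBpre : e' ⁻¹' A (n + 1) = B := by
    ext p
    simp only [he', mem_preimage, A, mem_setOf_eq, hB, Fin.forall_fin_succ, Fin.cons_zero,
      Fin.cons_succ, Fin.sum_cons]
  have hmemA : ∀ p : ℝ × (Fin n → ℝ), p ∈ B → Fin.cons p.1 p.2 ∈ A (n + 1) := by
    intro p hp
    rw [← hBpre] at hp
    exact hp
  -- measure-preserving equivalence
  set E2 := MeasurableEquiv.piFinSuccAbove (fun _ : Fin (n + 1) => ℝ) 0 with hE2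
  have hcoe : ⇑E2.symm = e' := by
    funext p
    simp [hE2, MeasurableEquiv.piFinSuccAbove_symm_apply, he', Fin.insertNthEquiv,
      Fin.insertNth_zero']
  have hmp : MeasurePreserving (⇑E2.symm) (volume : Measure (ℝ × (Fin n → ℝ)))
      (volume : Measure (Fin (n + 1) → ℝ)) :=
    MeasurePreserving.symm E2 (volume_preserving_piFinSuccAbove _ 0)
  have hmp' : MeasurePreserving e' (volume : Measure (ℝ × (Fin n → ℝ)))
      (volume : Measure (Fin (n + 1) → ℝ)) := hcoe ▸ hmp
  have hemb : MeasurableEmbedding e' := hcoe ▸ E2.symm.measurableEmbedding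
  -- the integrand on the product space
  set h : ℝ × (Fin n → ℝ) → ℂ := fun p =>
    (z 0 - z (Fin.last (n + 1))) • D U f (n + 1)
      (pt (fun j => z j.succ) p.2 + p.1 • (z 0 - z (Fin.last (n + 1)))) with hh
  -- step 1 : express the lhs as an integral over B
  have step1 : (z 0 - z (Fin.last (n + 1))) • G U f (n + 1) z = ∫ p in B, h p := by
    rw [G, ← integral_smul]
    rw [← hBpre]
    rw [← hmp'.setIntegral_preimage_emb hemb
      (fun θ => (z 0 - z (Fin.last (n + 1))) • D U f (n + 1) (pt z θ)) (A (n + 1))]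
    congr 1
    funext p
    rw [hh, he']
    simp only []
    rw [pt_cons]
  -- compactness of B
  have hBsub : B ⊆ (Icc (0:ℝ) 1) ×ˢ A n := by
    rintro p ⟨⟨h1, h2⟩, h3⟩
    have hs : 0 ≤ ∑ i, p.2 i := Finset.sum_nonneg fun i _ => h2 i
    exact ⟨⟨h1, by linarith⟩, h2, by linarith⟩
  have hecont : Continuous e' := by
    apply continuous_pi
    intro j
    refine Fin.cases ?_ (fun i => ?_) j
    · simp only [he', Fin.cons_zero]; exact continuous_fst
    · simp only [he', Fin.cons_succ]; exact (continuous_apply i).comp continuous_snd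
  have hBclosed : IsClosed B := hBpre ▸ (isClosed_A (n + 1)).preimage hecont
  have hBcompact : IsCompact B :=
    IsCompact.of_isClosed_subset (isCompact_Icc.prod (isCompact_A n)) hBclosed hBsub
  have hBmeas : MeasurableSet B := hBclosed.measurableSet
  -- integrability of h on B
  have hmemU : ∀ p : ℝ × (Fin n → ℝ), p ∈ B →
      pt (fun j => z j.succ) p.2 + p.1 • (z 0 - z (Fin.last (n + 1))) ∈ U := by
    intro p hp
    rw [← pt_cons]
    exact pt_mem hUc hz (hmemA p hp)
  have hIntB : IntegrableOn h B := by
    apply ContinuousOn.integrableOn_compact hBcompact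
    apply ContinuousOn.fun_const_smul
    refine (D_cont hU hf (n + 1)).comp ?_ hmemU
    exact (((continuous_pt (fun j => z j.succ)).comp continuous_snd).add
      (continuous_fst.smul continuous_const)).continuousOn
  -- Fubini
  have step2 : ∫ p in B, h p = ∫ η, ∫ t, B.indicator h (t, η) := by
    rw [← integral_indicator hBmeas]
    exact MeasureTheory.integral_prod_symm _ ((integrable_indicator_iff hBmeas).2 hIntB)
  -- the inner integral
  have step3 : ∀ η : Fin n → ℝ,
      (∫ t, B.indicator h (t, η))
        = (A n).indicator
            (fun η => D U f n (pt (cyc (fun j : Fin (n + 1) => z j.castSucc)) η)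
              - D U f n (pt (fun j : Fin (n + 1) => z j.succ) η)) η := by
    intro η
    by_cases hη : η ∈ A n
    · have hslice : ∀ t : ℝ, B.indicator h (t, η)
          = (Icc (0:ℝ) (1 - ∑ i, η i)).indicator
              (fun t => (z 0 - z (Fin.last (n + 1))) • D U f (n + 1)
                (pt (fun j => z j.succ) η + t • (z 0 - z (Fin.last (n + 1))))) t := by
        intro t
        have hiff : ((t, η) ∈ B) ↔ t ∈ Icc (0:ℝ) (1 - ∑ i, η i) := by
          simp only [hB, mem_setOf_eq, mem_Icc]
          constructor
          · rintro ⟨⟨h1, _⟩, h3⟩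
            exact ⟨h1, by linarith⟩
          · rintro ⟨h1, h2⟩
            exact ⟨⟨h1, hη.1⟩, by linarith⟩
        simp only [indicator, hiff, hh]
      rw [indicator_of_mem hη]
      calc (∫ t, B.indicator h (t, η))
          = ∫ t, (Icc (0:ℝ) (1 - ∑ i, η i)).indicator
              (fun t => (z 0 - z (Fin.last (n + 1))) • D U f (n + 1)
                (pt (fun j => z j.succ) η + t • (z 0 - z (Fin.last (n + 1))))) t := by
            exact integral_congr_ae (Filter.Eventually.of_forall hslice)
        _ = ∫ t in Icc (0:ℝ) (1 - ∑ i, η i),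
              (z 0 - z (Fin.last (n + 1))) • D U f (n + 1)
                (pt (fun j => z j.succ) η + t • (z 0 - z (Fin.last (n + 1)))) :=
            integral_indicator measurableSet_Icc
        _ = D U f n (pt (fun j => z j.succ) η
                + ((1 - ∑ i, η i) : ℝ) • (z 0 - z (Fin.last (n + 1))))
              - D U f n (pt (fun j => z j.succ) η) := by
            have hs0 : (0:ℝ) ≤ 1 - ∑ i, η i := by
              have := hη.2
              linarith
            refine ftc hU hf n hs0 ?_
            intro t ht
            rw [← pt_cons]
            apply pt_mem hUc hz
            refine hmemA (t, η) ?_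
            rcases ht with ⟨ht1, ht2⟩
            exact ⟨⟨ht1, hη.1⟩, by linarith⟩
        _ = D U f n (pt (cyc (fun j : Fin (n + 1) => z j.castSucc)) η)
              - D U f n (pt (fun j : Fin (n + 1) => z j.succ) η) := by
            rw [pt_endpoint]
    · have hzero : ∀ t : ℝ, B.indicator h (t, η) = 0 := by
        intro t
        apply indicator_of_notMem
        intro hmem
        rcases hmem with ⟨⟨h1, h2⟩, h3⟩
        exact hη ⟨h2, by linarith⟩
      rw [indicator_of_notMem hη]
      simp only [hzero]
      exact integral_zero _ _
  rw [step1, step2]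
  rw [integral_congr_ae (Filter.Eventually.of_forall step3)]
  rw [integral_indicator (measurableSet_A n)]
  rw [integral_sub (integrableOn_D_pt hU hUc hf n hcycmem) (integrableOn_D_pt hU hUc hf n hzs)]
  have := G_cyc (U := U) (f := f) (n := n) (fun j : Fin (n + 1) => z j.castSucc)
  rw [G, G] at this ⊢
  rw [this]


lemma A_zero : A 0 = univ := by
  ext θ
  simp [A]

lemma G_zero (z : Fin 1 → ℂ) : G U f 0 z = f (z 0) := by
  have hpt : ∀ θ : Fin 0 → ℝ, pt z θ = z 0 := by
    intro θ
    rw [pt]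
    simp
  have hD0 : D U f 0 = f := by
    funext x
    rw [D, iteratedDerivWithin_zero]
  rw [G, A_zero, setIntegral_univ, hD0]
  simp only [hpt]
  rw [integral_const]
  have huniv : (volume : Measure (Fin 0 → ℝ)) univ = 1 := by
    rw [volume_pi, Measure.pi_univ]
    simp
  rw [measureReal_def, huniv]
  simp

lemma G_continuousAt (hU : IsOpen U) (hUc : Convex ℝ U) (hf : DifferentiableOn ℂ f U)
    {n : ℕ} {z : Fin (n + 1) → ℂ} (hz : ∀ j, z j ∈ U) :
    ContinuousAt (G U f n) z := by
  have hP : IsCompact ((pt z) '' (A n)) := (isCompact_A n).image (continuous_pt z)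
  have hPU : (pt z) '' (A n) ⊆ U := by
    rintro x ⟨θ, hθ, rfl⟩
    exact pt_mem hUc hz hθ
  obtain ⟨r, hr0, hrU⟩ : ∃ r > 0, Metric.cthickening r ((pt z) '' (A n)) ⊆ U :=
    hP.exists_cthickening_subset_open hU hPU
  have hK : IsCompact (Metric.cthickening r ((pt z) '' (A n))) := hP.cthickening
  obtain ⟨M, hM⟩ := hK.exists_bound_of_continuousOn ((D_cont hU hf n).mono hrU)
  -- membership estimate
  have hest : ∀ w : Fin (n + 1) → ℂ, dist w z ≤ r → ∀ θ ∈ A n,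
      pt w θ ∈ Metric.cthickening r ((pt z) '' (A n)) := by
    intro w hw θ hθ
    have hdist : dist (pt w θ) (pt z θ) ≤ r := by
      rw [dist_eq_norm]
      have hdecomp : pt w θ - pt z θ
          = (∑ j : Fin n, (θ j : ℂ) * (w j.castSucc - z j.castSucc))
            + ((1 - ∑ j, θ j : ℝ) : ℂ) * (w (Fin.last n) - z (Fin.last n)) := by
        rw [pt, pt]
        push_cast
        simp only [mul_sub, Finset.sum_sub_distrib]
        ring
      have hcoord : ∀ j : Fin (n + 1), ‖w j - z j‖ ≤ r := by
        intro j
        rw [← dist_eq_norm]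
        exact (dist_le_pi_dist w z j).trans hw
      have h1 : ‖∑ j : Fin n, (θ j : ℂ) * (w j.castSucc - z j.castSucc)‖
          ≤ (∑ j, θ j) * r := by
        refine (norm_sum_le _ _).trans ?_
        rw [Finset.sum_mul]
        refine Finset.sum_le_sum fun j _ => ?_
        rw [norm_mul, Complex.norm_real, Real.norm_eq_abs, abs_of_nonneg (hθ.1 j)]
        exact mul_le_mul_of_nonneg_left (hcoord _) (hθ.1 j)
      have h2 : ‖((1 - ∑ j, θ j : ℝ) : ℂ) * (w (Fin.last n) - z (Fin.last n))‖
          ≤ (1 - ∑ j, θ j) * r := by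
        rw [norm_mul, Complex.norm_real, Real.norm_eq_abs,
          abs_of_nonneg (by linarith [hθ.2])]
        exact mul_le_mul_of_nonneg_left (hcoord _) (by linarith [hθ.2])
      calc ‖pt w θ - pt z θ‖
          ≤ ‖∑ j : Fin n, (θ j : ℂ) * (w j.castSucc - z j.castSucc)‖
            + ‖((1 - ∑ j, θ j : ℝ) : ℂ) * (w (Fin.last n) - z (Fin.last n))‖ := by
            rw [hdecomp]; exact norm_add_le _ _
        _ ≤ (∑ j, θ j) * r + (1 - ∑ j, θ j) * r := add_le_add h1 h2
        _ = r := by ring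
    exact Metric.mem_cthickening_of_dist_le (pt w θ) (pt z θ) r _
      (mem_image_of_mem _ hθ) hdist
  have hcw : ∀ θ : Fin n → ℝ, Continuous (fun w : Fin (n + 1) → ℂ => pt w θ) := by
    intro θ
    unfold pt
    fun_prop
  have hGrepr : G U f n = fun w => ∫ θ in A n, D U f n (pt w θ) := rfl
  rw [hGrepr]
  apply continuousAt_of_dominated (bound := fun _ => M)
  · filter_upwards [Metric.closedBall_mem_nhds z hr0] with w hw
    refine ContinuousOn.aestronglyMeasurable ?_ (measurableSet_A n)
    refine (D_cont hU hf n).comp (continuous_pt w).continuousOn ?_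
    intro θ hθ
    exact hrU (hest w (Metric.mem_closedBall.1 hw) θ hθ)
  · filter_upwards [Metric.closedBall_mem_nhds z hr0] with w hw
    refine (ae_restrict_iff' (measurableSet_A n)).2 (Filter.Eventually.of_forall ?_)
    intro θ hθ
    exact hM _ (hest w (Metric.mem_closedBall.1 hw) θ hθ)
  · exact integrableOn_const ((isCompact_A n).measure_lt_top.ne)
  · refine (ae_restrict_iff' (measurableSet_A n)).2 (Filter.Eventually.of_forall ?_)
    intro θ hθ
    exact ContinuousAt.comp (f := fun w : Fin (n + 1) → ℂ => pt w θ) (x := z)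
      ((D_cont hU hf n).continuousAt (hU.mem_nhds (pt_mem hUc hz hθ)))
      (hcw θ).continuousAt


theorem main (hU : IsOpen U) (hUc : Convex ℝ U) (hf : DifferentiableOn ℂ f U)
    (F : ∀ k : ℕ, (Fin (k + 1) → ℂ) → ℂ)
    (h0 : ∀ z : Fin 1 → ℂ, z 0 ∈ U → F 0 z = f (z 0))
    (hdiff : ∀ k, DifferentiableOn ℂ (F k) {z | ∀ j, z j ∈ U})
    (hrec : ∀ k, ∀ z : Fin (k + 2) → ℂ, (∀ j, z j ∈ U) →
      z 0 ≠ z (Fin.last (k + 1)) →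
      F (k + 1) z = (F k (fun j => z j.castSucc) - F k (fun j => z j.succ)) /
        (z 0 - z (Fin.last (k + 1)))) :
    ∀ n (z : Fin (n + 1) → ℂ), (∀ j, z j ∈ U) → F n z = G U f n z := by
  intro n
  induction n with
  | zero =>
    intro z hz
    rw [h0 z (hz 0), G_zero]
  | succ n ih =>
    have hoff : ∀ z : Fin (n + 2) → ℂ, (∀ j, z j ∈ U) → z 0 ≠ z (Fin.last (n + 1)) →
        F (n + 1) z = G U f (n + 1) z := by
      intro z hz hne
      rw [hrec n z hz hne, ih _ (fun j => hz _), ih _ (fun j => hz _)]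
      have hG := G_succ hU hUc hf z hz
      have hd : z 0 - z (Fin.last (n + 1)) ≠ 0 := sub_ne_zero.2 hne
      rw [← hG, smul_eq_mul]
      field_simp
    intro z hz
    by_cases hne : z 0 = z (Fin.last (n + 1))
    · -- limit argument
      have hΩopen : IsOpen {w : Fin (n + 2) → ℂ | ∀ j, w j ∈ U} := by
        have : {w : Fin (n + 2) → ℂ | ∀ j, w j ∈ U}
            = ⋂ j, (fun w : Fin (n + 2) → ℂ => w j) ⁻¹' U := by
          ext w; simp
        rw [this]
        exact isOpen_iInter_of_finite fun j => hU.preimage (continuous_apply j)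
      have hFcont : ContinuousAt (F (n + 1)) z :=
        (hdiff (n + 1)).continuousOn.continuousAt (hΩopen.mem_nhds hz)
      have hGcont : ContinuousAt (G U f (n + 1)) z := G_continuousAt hU hUc hf hz
      obtain ⟨ε, hε0, hεU⟩ : ∃ ε > 0, Metric.ball (z 0) ε ⊆ U :=
        Metric.isOpen_iff.1 hU (z 0) (hz 0)
      set γ : ℝ → (Fin (n + 2) → ℂ) :=
        fun t => Function.update z 0 (z 0 + (t : ℂ)) with hγ
      have hγc : Continuous γ := by
        apply continuous_pi
        intro j
        by_cases hj : j = 0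
        · subst hj
          simp only [hγ, Function.update_self]
          fun_prop
        · simp only [hγ, Function.update_of_ne hj]
          exact continuous_const
      have hγ0 : γ 0 = z := by
        funext j
        simp [hγ]
      have hγmem : ∀ t : ℝ, t ∈ Ioo (0:ℝ) ε → ∀ j, γ t j ∈ U := by
        intro t ht j
        by_cases hj : j = 0
        · subst hj
          rw [hγ]
          simp only [Function.update_self]
          apply hεU
          rw [Metric.mem_ball, dist_eq_norm]
          have : z 0 + (t : ℂ) - z 0 = (t : ℂ) := by ring
          rw [this, Complex.norm_real, Real.norm_eq_abs, abs_of_pos ht.1]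
          exact ht.2
        · rw [hγ]
          simp only [Function.update_of_ne hj]
          exact hz j
      have hlast0 : (Fin.last (n + 1) : Fin (n + 2)) ≠ 0 := by
        simp [Fin.ext_iff]
      have hγne : ∀ t : ℝ, t ∈ Ioo (0:ℝ) ε → γ t 0 ≠ γ t (Fin.last (n + 1)) := by
        intro t ht
        rw [hγ]
        simp only [Function.update_self, Function.update_of_ne hlast0]
        rw [← hne]
        intro hcon
        have ht0 : (t : ℂ) = 0 := by
          have := sub_eq_zero.2 hcon
          simpa using this
        have : t = 0 := by exact_mod_cast ht0
        exact ne_of_gt ht.1 this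
      have hkey : ∀ t : ℝ, t ∈ Ioo (0:ℝ) ε →
          F (n + 1) (γ t) = G U f (n + 1) (γ t) := fun t ht =>
        hoff (γ t) (hγmem t ht) (hγne t ht)
      have hγt : Filter.Tendsto γ (nhdsWithin 0 (Ioi 0)) (nhds z) := by
        rw [← hγ0]
        exact (hγc.continuousAt.tendsto).mono_left nhdsWithin_le_nhds
      have h1 : Filter.Tendsto (fun t => F (n + 1) (γ t)) (nhdsWithin 0 (Ioi 0))
          (nhds (F (n + 1) z)) := hFcont.tendsto.comp hγt
      have h2 : Filter.Tendsto (fun t => G U f (n + 1) (γ t)) (nhdsWithin 0 (Ioi 0))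
          (nhds (G U f (n + 1) z)) := hGcont.tendsto.comp hγt
      have heq : (fun t => F (n + 1) (γ t)) =ᶠ[nhdsWithin 0 (Ioi 0)]
          (fun t => G U f (n + 1) (γ t)) := by
        filter_upwards [Ioo_mem_nhdsGT_of_mem (by constructor <;> [exact le_refl 0; exact hε0])]
          with t ht using hkey t ht
      exact tendsto_nhds_unique (h1.congr' heq) h2
    · exact hoff z hz hne

end GenocchiAux

/-- Genocchi–Hermite formula.  For a convex domain `U ⊆ ℂ`, a
holomorphic `f` on `U` and `z ∈ U^(n+1)`,
`f^[n](z) = ∫_{Aₙ} f⁽ⁿ⁾(θ₁z₁+⋯+θₙzₙ+(1-Σθ)z_{n+1}) dθ`, the integral being over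
the corner simplex `Aₙ = {θ ∈ ℝⁿ : θⱼ ≥ 0, Σθⱼ ≤ 1}` with Lebesgue measure. -/
theorem genocchi_hermite
    (U : Set ℂ) (hU : IsOpen U) (hUc : Convex ℝ U)
    (f : ℂ → ℂ) (hf : DifferentiableOn ℂ f U)
    (F : ∀ k : ℕ, (Fin (k + 1) → ℂ) → ℂ) (hF : IsDividedDiffSystem U f F)
    (n : ℕ) (z : Fin (n + 1) → ℂ) (hz : ∀ j, z j ∈ U) :
    F n z =
      ∫ θ in {θ : Fin n → ℝ | (∀ j, 0 ≤ θ j) ∧ ∑ j, θ j ≤ 1},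
        iteratedDerivWithin n f U
          ((∑ j : Fin n, (θ j : ℂ) * z j.castSucc) +
            ((1 - ∑ j, θ j : ℝ) : ℂ) * z (Fin.last n)) := by
  obtain ⟨h0, hdiff, hrec⟩ := hF
  have := GenocchiAux.main hU hUc hf F h0 hdiff hrec n z hz
  rw [this]
  rfl
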